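/- Proposition (structure of G_n): let n ≥ 3 and let G_n be the subgroup of Equiv.Perm (Fin n → ZMod 12) generated by all contextual inversions p i j with i ≠ j. Then G_n is isomorphic to the semidirect product of the additive group Fin (n−1) → ZMod 12 by ZMod 2, where the nontrivial element of ZMod 2 acts by negation (a ↦ −a). -/

import Mathlib

/-- Contextual inversion `p i j` on pitch-class segments of length `n`. -/
def p {n : ℕ} (i j : Fin n) (x : Fin n → ZMod 12) : Fin n → ZMod 12 :=
  fun r => x i + x j - x r

/-- Contextual inversion `p i j` as a permutation (it is an involution). -/
def pEquiv {n : ℕ} (i j : Fin n) : Equiv.Perm (Fin n → ZMod 12) where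
  toFun := p i j
  invFun := p i j
  left_inv x := by funext r; simp only [p]; ring
  right_inv x := by funext r; simp only [p]; ring

/-- The negation automorphism `a ↦ -a` of the abelian group `Fin m → ZMod 12`,
written multiplicatively. -/
def negAut (m : ℕ) : MulAut (Multiplicative (Fin m → ZMod 12)) :=
  { toFun := fun a => a⁻¹
    invFun := fun a => a⁻¹
    left_inv := fun a => inv_inv a
    right_inv := fun a => inv_inv a
    map_mul' := fun a b => (mul_inv_rev a b).trans (mul_comm _ _) }

/-- The action of `ZMod 2` on `Fin m → ZMod 12` in which the nontrivial element
acts by negation. -/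
def negHom (m : ℕ) :
    Multiplicative (ZMod 2) →* MulAut (Multiplicative (Fin m → ZMod 12)) where
  toFun g := if Multiplicative.toAdd g = 0 then 1 else negAut m
  map_one' := by simp
  map_mul' := by
    have hsq : negAut m * negAut m = 1 := by
      ext x
      simp [negAut]
    have h2 : ∀ c : ZMod 2, c = 0 ∨ c = 1 := by decide
    have hadd : (1 : ZMod 2) + 1 = 0 := by decide
    intro a b
    rcases h2 (Multiplicative.toAdd a) with ha | ha <;>
      rcases h2 (Multiplicative.toAdd b) with hb | hb <;>
      simp [toAdd_mul, ha, hb, hadd, hsq]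

section Aux

variable (n : ℕ) (hn : 3 ≤ n)

def pequiv_apply {n : ℕ} (i j : Fin n) (x : Fin n → ZMod 12) (r : Fin n) :
    pEquiv i j x r = x i + x j - x r := rfl

def emb (k : Fin (n - 1)) : Fin n := ⟨k.val, lt_of_lt_of_le k.isLt (Nat.sub_le n 1)⟩

def lastI : Fin n := ⟨n - 1, by omega⟩

def B (v : Fin (n - 1) → ZMod 12) (x : Fin n → ZMod 12) : ZMod 12 :=
  ∑ k, v k * (x (emb n k) - x (lastI n hn))

lemma B_add (v w : Fin (n-1) → ZMod 12) (x : Fin n → ZMod 12) :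
    B n hn (v + w) x = B n hn v x + B n hn w x := by
  simp only [B, ← Finset.sum_add_distrib]
  exact Finset.sum_congr rfl fun k _ => by simp [add_mul]

lemma B_addconst (v : Fin (n-1) → ZMod 12) (x : Fin n → ZMod 12) (c : ZMod 12) :
    B n hn v (fun r => x r + c) = B n hn v x := by
  exact Finset.sum_congr rfl fun k _ => by ring

lemma B_reflect (v : Fin (n-1) → ZMod 12) (x : Fin n → ZMod 12) (c : ZMod 12) :
    B n hn v (fun r => c - x r) = - B n hn v x := by
  simp only [B, ← Finset.sum_neg_distrib]
  exact Finset.sum_congr rfl fun k _ => by ring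

def Tmap (v : Fin (n-1) → ZMod 12) : Equiv.Perm (Fin n → ZMod 12) where
  toFun x := fun r => x r + B n hn v x
  invFun x := fun r => x r - B n hn v x
  left_inv x := by
    funext r
    simp only []
    rw [B_addconst]
    ring
  right_inv x := by
    funext r
    simp only []
    have h1 : (fun s => x s - B n hn v x) = (fun s => x s + (- B n hn v x)) := by
      funext s; ring
    rw [h1, B_addconst]
    ring

lemma Tmap_apply (v : Fin (n-1) → ZMod 12) (x : Fin n → ZMod 12) (r : Fin n) :
    Tmap n hn v x r = x r + B n hn v x := rfl

lemma Tmap_mul (v w : Fin (n-1) → ZMod 12) :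
    Tmap n hn (v + w) = Tmap n hn v * Tmap n hn w := by
  ext x r
  simp only [Equiv.Perm.mul_apply, Tmap_apply]
  have : B n hn v (⇑(Tmap n hn w) x) = B n hn v x := by
    have h : ⇑(Tmap n hn w) x = fun s => x s + B n hn w x := rfl
    rw [h, B_addconst]
  rw [this, B_add]
  ring

def Thom : Multiplicative (Fin (n-1) → ZMod 12) →* Equiv.Perm (Fin n → ZMod 12) :=
  MonoidHom.mk' (fun v => Tmap n hn (Multiplicative.toAdd v))
    (fun v w => Tmap_mul n hn (Multiplicative.toAdd v) (Multiplicative.toAdd w))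

def i0 : Fin n := ⟨0, by omega⟩
def j0 : Fin n := ⟨1, by omega⟩

def S : Equiv.Perm (Fin n → ZMod 12) := pEquiv (i0 n hn) (j0 n hn)

lemma S_sq : S n hn * S n hn = 1 := by
  ext x r
  simp only [Equiv.Perm.mul_apply, S, pequiv_apply, Equiv.Perm.one_apply]
  ring

def Shom : Multiplicative (ZMod 2) →* Equiv.Perm (Fin n → ZMod 12) where
  toFun g := if Multiplicative.toAdd g = 0 then 1 else S n hn
  map_one' := by simp
  map_mul' := by
    have h2 : ∀ c : ZMod 2, c = 0 ∨ c = 1 := by decide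
    have hadd : (1 : ZMod 2) + 1 = 0 := by decide
    intro a b
    rcases h2 (Multiplicative.toAdd a) with ha | ha <;>
      rcases h2 (Multiplicative.toAdd b) with hb | hb <;>
      simp [toAdd_mul, ha, hb, hadd, S_sq]

lemma S_conj (v : Fin (n-1) → ZMod 12) :
    S n hn * Tmap n hn v * S n hn = Tmap n hn (-v) := by
  ext x r
  simp only [Equiv.Perm.mul_apply, Tmap_apply, S, pequiv_apply]
  have h1 : ⇑(pEquiv (i0 n hn) (j0 n hn)) x = fun s => (x (i0 n hn) + x (j0 n hn)) - x s := by
    funext s; rfl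
  rw [h1, B_reflect]
  have h2 : B n hn (-v) x = - B n hn v x := by
    simp only [B, ← Finset.sum_neg_distrib]
    exact Finset.sum_congr rfl fun k _ => by simp [neg_mul]
  rw [h2]
  ring

lemma compat : ∀ g : Multiplicative (ZMod 2),
    (Thom n hn).comp ((negHom (n-1) g).toMonoidHom) =
      (MulAut.conj (Shom n hn g)).toMonoidHom.comp (Thom n hn) := by
  intro g
  apply MonoidHom.ext
  intro v
  simp only [MonoidHom.comp_apply, MulEquiv.coe_toMonoidHom, MulAut.conj_apply]
  by_cases h : Multiplicative.toAdd g = 0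
  · have hS : Shom n hn g = 1 := by
      simp only [Shom, MonoidHom.coe_mk, OneHom.coe_mk]; rw [if_pos h]
    have hN : (negHom (n-1)) g = 1 := by
      simp only [negHom, MonoidHom.coe_mk, OneHom.coe_mk]; rw [if_pos h]
    rw [hS, hN]; simp
  · have hS : Shom n hn g = S n hn := by
      simp only [Shom, MonoidHom.coe_mk, OneHom.coe_mk]; rw [if_neg h]
    have hN : (negHom (n-1)) g = negAut (n-1) := by
      simp only [negHom, MonoidHom.coe_mk, OneHom.coe_mk]; rw [if_neg h]
    rw [hS, hN]
    have hSinv : (S n hn)⁻¹ = S n hn := by rw [eq_comm, eq_inv_iff_mul_eq_one, S_sq]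
    rw [hSinv]
    have h1 : Thom n hn ((negAut (n-1)) v) = Tmap n hn (-(Multiplicative.toAdd v)) := rfl
    have h2 : Thom n hn v = Tmap n hn (Multiplicative.toAdd v) := rfl
    rw [h1, h2, ← S_conj n hn]

def phi : (Multiplicative (Fin (n - 1) → ZMod 12)) ⋊[negHom (n - 1)]
    Multiplicative (ZMod 2) →* Equiv.Perm (Fin n → ZMod 12) :=
  SemidirectProduct.lift (Thom n hn) (Shom n hn) (compat n hn)


lemma emb_ne_last (k : Fin (n-1)) : emb n k ≠ lastI n hn := by
  intro h
  have := congrArg Fin.val h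
  simp only [emb, lastI] at this
  have := k.isLt
  omega

lemma emb_inj : Function.Injective (emb n) := fun a b h =>
  Fin.ext (congrArg (fun t : Fin n => t.val) h)

lemma B_single (k : Fin (n-1)) (c : ZMod 12) (x : Fin n → ZMod 12) :
    B n hn (Pi.single k c) x = c * (x (emb n k) - x (lastI n hn)) := by
  rw [B, Finset.sum_eq_single k]
  · rw [Pi.single_eq_same]
  · intro b _ hb; rw [Pi.single_eq_of_ne hb, zero_mul]
  · intro h; exact absurd (Finset.mem_univ k) h

lemma B_delta (a : Fin n) (x : Fin n → ZMod 12) :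
    (∑ k, (if emb n k = a then (1:ZMod 12) else 0) * (x (emb n k) - x (lastI n hn)))
      = x a - x (lastI n hn) := by
  by_cases ha : a.val < n - 1
  · have hk0 : emb n ⟨a.val, ha⟩ = a := Fin.ext rfl
    rw [Finset.sum_eq_single (⟨a.val, ha⟩ : Fin (n-1))]
    · rw [if_pos hk0, one_mul, hk0]
    · intro b _ hb
      rw [if_neg, zero_mul]
      intro hba
      exact hb (emb_inj n (hba.trans hk0.symm))
    · intro h; exact absurd (Finset.mem_univ _) h
  · have haL : a = lastI n hn := Fin.ext (by simp only [lastI]; have := a.isLt; omega)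
    rw [haL, sub_self]
    apply Finset.sum_eq_zero
    intro k _
    rw [if_neg (emb_ne_last n hn k), zero_mul]

def wgen (i j : Fin n) : Fin (n-1) → ZMod 12 := fun k =>
  (if emb n k = i0 n hn then 1 else 0) + (if emb n k = j0 n hn then 1 else 0)
    - (if emb n k = i then 1 else 0) - (if emb n k = j then 1 else 0)

lemma B_wgen (i j : Fin n) (x : Fin n → ZMod 12) :
    B n hn (wgen n hn i j) x = x (i0 n hn) + x (j0 n hn) - x i - x j := by
  have expand : B n hn (wgen n hn i j) x =
      (∑ k, (if emb n k = i0 n hn then (1:ZMod 12) else 0) * (x (emb n k) - x (lastI n hn)))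
      + (∑ k, (if emb n k = j0 n hn then (1:ZMod 12) else 0) * (x (emb n k) - x (lastI n hn)))
      - (∑ k, (if emb n k = i then (1:ZMod 12) else 0) * (x (emb n k) - x (lastI n hn)))
      - (∑ k, (if emb n k = j then (1:ZMod 12) else 0) * (x (emb n k) - x (lastI n hn))) := by
    simp only [B, wgen, ← Finset.sum_sub_distrib, ← Finset.sum_add_distrib]
    exact Finset.sum_congr rfl fun k _ => by ring
  rw [expand, B_delta, B_delta, B_delta, B_delta]
  ring

lemma gen_eq (i j : Fin n) :
    pEquiv i j = Tmap n hn (wgen n hn i j) * S n hn := by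
  ext x r
  have h1 : ⇑(S n hn) x = fun s => (x (i0 n hn) + x (j0 n hn)) - x s := rfl
  simp only [Equiv.Perm.mul_apply, Tmap_apply, pequiv_apply, h1, B_reflect, B_wgen]
  ring

def sgen (k : Fin (n-1)) : Fin n := if k.val = 0 then j0 n hn else i0 n hn

lemma sgen_ne_last (k : Fin (n-1)) : sgen n hn k ≠ lastI n hn := by
  intro h
  have := congrArg Fin.val h
  unfold sgen at this
  by_cases h0 : k.val = 0 <;> simp [h0, j0, i0, lastI] at this <;> omega

lemma sgen_ne_emb (k : Fin (n-1)) : sgen n hn k ≠ emb n k := by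
  intro h
  have := congrArg Fin.val h
  unfold sgen at this
  by_cases h0 : k.val = 0 <;> simp [h0, j0, i0, emb] at this <;> omega

lemma Tsingle (k : Fin (n-1)) :
    Tmap n hn (Pi.single k 1) =
      pEquiv (sgen n hn k) (lastI n hn) * pEquiv (sgen n hn k) (emb n k) := by
  ext x r
  simp only [Equiv.Perm.mul_apply, pequiv_apply, Tmap_apply, B_single]
  ring

def genSet : Set (Equiv.Perm (Fin n → ZMod 12)) :=
  {g | ∃ i j : Fin n, i ≠ j ∧ g = pEquiv i j}

lemma i0_ne_j0 : i0 n hn ≠ j0 n hn := by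
  intro h
  have := congrArg Fin.val h
  simp [i0, j0] at this

lemma S_mem : S n hn ∈ Subgroup.closure (genSet n) :=
  Subgroup.subset_closure ⟨i0 n hn, j0 n hn, i0_ne_j0 n hn, rfl⟩

lemma Tmap_zero : Tmap n hn 0 = 1 := by
  ext x r
  simp only [Tmap_apply, B, Pi.zero_apply, zero_mul, Finset.sum_const_zero,
    Equiv.Perm.one_apply, add_zero]

lemma Tmap_nsmul (m : ℕ) (v : Fin (n-1) → ZMod 12) :
    Tmap n hn (m • v) = (Tmap n hn v) ^ m := by
  induction m with
  | zero => simp [Tmap_zero]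
  | succ m ih => rw [succ_nsmul, Tmap_mul, ih, pow_succ]

lemma Tmap_single_mem (k : Fin (n-1)) (c : ZMod 12) :
    Tmap n hn (Pi.single k c) ∈ Subgroup.closure (genSet n) := by
  have h1 : Pi.single k c = c.val • (Pi.single k 1 : Fin (n-1) → ZMod 12) := by
    funext b
    rw [Pi.smul_apply]
    by_cases hb : b = k
    · subst hb
      rw [Pi.single_eq_same, Pi.single_eq_same, nsmul_eq_mul, mul_one]
      exact (ZMod.natCast_rightInverse c).symm
    · rw [Pi.single_eq_of_ne hb, Pi.single_eq_of_ne hb, smul_zero]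
  rw [h1, Tmap_nsmul, Tsingle]
  refine pow_mem (mul_mem (Subgroup.subset_closure ?_) (Subgroup.subset_closure ?_)) _
  · exact ⟨_, _, sgen_ne_last n hn k, rfl⟩
  · exact ⟨_, _, sgen_ne_emb n hn k, rfl⟩

lemma Tmap_mem (v : Fin (n-1) → ZMod 12) :
    Tmap n hn v ∈ Subgroup.closure (genSet n) := by
  have key : ∀ s : Finset (Fin (n-1)),
      Tmap n hn (∑ k ∈ s, Pi.single k (v k)) ∈ Subgroup.closure (genSet n) := by
    intro s
    induction s using Finset.induction_on with
    | empty => simp only [Finset.sum_empty, Tmap_zero]; exact one_mem _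
    | insert _ _ hns ih =>
      rw [Finset.sum_insert hns, Tmap_mul]
      exact mul_mem (Tmap_single_mem n hn _ _) ih
  have := key Finset.univ
  rwa [Finset.univ_sum_single] at this

lemma phi_apply (v : Multiplicative (Fin (n-1) → ZMod 12)) (h : Multiplicative (ZMod 2)) :
    phi n hn ⟨v, h⟩ = Tmap n hn (Multiplicative.toAdd v) * Shom n hn h := rfl

lemma Shom_mem (h : Multiplicative (ZMod 2)) :
    Shom n hn h ∈ Subgroup.closure (genSet n) := by
  by_cases hh : Multiplicative.toAdd h = 0
  · have : Shom n hn h = 1 := by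
      simp only [Shom, MonoidHom.coe_mk, OneHom.coe_mk]; rw [if_pos hh]
    rw [this]; exact one_mem _
  · have : Shom n hn h = S n hn := by
      simp only [Shom, MonoidHom.coe_mk, OneHom.coe_mk]; rw [if_neg hh]
    rw [this]; exact S_mem n hn

lemma range_eq : (phi n hn).range = Subgroup.closure (genSet n) := by
  apply le_antisymm
  · rintro g ⟨⟨v, h⟩, rfl⟩
    rw [phi_apply]
    exact mul_mem (Tmap_mem n hn _) (Shom_mem n hn h)
  · rw [Subgroup.closure_le]
    rintro g ⟨i, j, hij, rfl⟩
    refine ⟨⟨Multiplicative.ofAdd (wgen n hn i j), Multiplicative.ofAdd 1⟩, ?_⟩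
    rw [phi_apply]
    have hS : Shom n hn (Multiplicative.ofAdd 1) = S n hn := by
      simp only [Shom, MonoidHom.coe_mk, OneHom.coe_mk]
      rw [if_neg]
      decide
    rw [hS]
    exact (gen_eq n hn i j).symm

lemma phi_inj : Function.Injective (phi n hn) := by
  rw [injective_iff_map_eq_one]
  rintro ⟨v, h⟩ ha
  rw [phi_apply] at ha
  by_cases hh : Multiplicative.toAdd h = 0
  · have hS1 : Shom n hn h = 1 := by
      simp only [Shom, MonoidHom.coe_mk, OneHom.coe_mk]; rw [if_pos hh]
    rw [hS1, mul_one] at ha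
    have hv : Multiplicative.toAdd v = 0 := by
      funext k
      set x : Fin n → ZMod 12 := fun r => if r = emb n k then 1 else 0 with hx
      have h1 : Tmap n hn (Multiplicative.toAdd v) x (emb n k) = x (emb n k) := by
        rw [ha]; rfl
      rw [Tmap_apply, add_eq_left] at h1
      have hlk : ¬ (lastI n hn = emb n k) := fun hc => (emb_ne_last n hn k) hc.symm
      have hB : B n hn (Multiplicative.toAdd v) x = Multiplicative.toAdd v k := by
        rw [B, Finset.sum_eq_single k]
        · rw [hx]; simp [hlk]
        · intro b _ hb
          have hbk : ¬ (emb n b = emb n k) := fun hc => hb (emb_inj n hc)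
          rw [hx]; simp [hbk, hlk]
        · intro hc; exact absurd (Finset.mem_univ _) hc
      rw [hB] at h1
      exact h1
    have hv1 : v = 1 := by
      have : Multiplicative.toAdd v = Multiplicative.toAdd (1 : Multiplicative (Fin (n-1) → ZMod 12)) := hv
      exact Multiplicative.toAdd.injective this
    have hh1 : h = 1 := by
      have : Multiplicative.toAdd h = Multiplicative.toAdd (1 : Multiplicative (ZMod 2)) := hh
      exact Multiplicative.toAdd.injective this
    rw [hv1, hh1]
    rfl
  · exfalso
    have hS1 : Shom n hn h = S n hn := by
      simp only [Shom, MonoidHom.coe_mk, OneHom.coe_mk]; rw [if_neg hh]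
    rw [hS1] at ha
    set x : Fin n → ZMod 12 := fun r => if r = j0 n hn then 1 else 0 with hx
    have hxi : x (i0 n hn) = 0 := by rw [hx]; simp [i0_ne_j0 n hn]
    have hxj : x (j0 n hn) = 1 := by rw [hx]; simp
    have h1 : (Tmap n hn (Multiplicative.toAdd v) * S n hn) x (i0 n hn) = x (i0 n hn) := by
      rw [ha]; rfl
    have h2 : (Tmap n hn (Multiplicative.toAdd v) * S n hn) x (j0 n hn) = x (j0 n hn) := by
      rw [ha]; rfl
    have hSxi : ⇑(S n hn) x (i0 n hn) = x (j0 n hn) := by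
      show x (i0 n hn) + x (j0 n hn) - x (i0 n hn) = x (j0 n hn); ring
    have hSxj : ⇑(S n hn) x (j0 n hn) = x (i0 n hn) := by
      show x (i0 n hn) + x (j0 n hn) - x (j0 n hn) = x (i0 n hn); ring
    rw [Equiv.Perm.mul_apply, Tmap_apply, hSxi] at h1
    rw [Equiv.Perm.mul_apply, Tmap_apply, hSxj] at h2
    rw [hxi, hxj] at h1 h2
    -- h1 : 1 + t = 0, h2 : 0 + t = 1
    rw [zero_add] at h2
    rw [h2] at h1
    exact absurd h1 (by decide)

end Aux

theorem stmt11 (n : ℕ) (hn : 3 ≤ n) :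
    Nonempty ((Subgroup.closure
        {g : Equiv.Perm (Fin n → ZMod 12) | ∃ i j : Fin n, i ≠ j ∧ g = pEquiv i j}) ≃*
      (Multiplicative (Fin (n - 1) → ZMod 12)) ⋊[negHom (n - 1)]
        Multiplicative (ZMod 2)) := by
  have e1 := MulEquiv.subgroupCongr (range_eq n hn).symm
  have e2 := (MonoidHom.ofInjective (phi_inj n hn)).symm
  exact ⟨(e1.trans e2 : _)⟩
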